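/- arXiv:1912.04099 — 2 statements merged into one kernel-verified Lean document; each statement's English description precedes it below -/
import Mathlib

section
/- Let B and B' be n × m {0,1}-matrices defined by two pairs of partitions: B_{ij} = 1 iff (i ∈ M and j ∈ A) or (i ∈ W and j ∈ R), and B'_{ij} = 1 iff (i ∈ M' and j ∈ A') or (i ∈ W' and j ∈ R'). Let k₁ = |M ∩ W'| and k₂ = |A ∩ R'|. Then the number of entries (i,j) with B_{ij} ≠ B'_{ij} equals 2mk₁ + 2nk₂ − 8k₁k₂. -/
open Finset

lemma compl_char {α} [Fintype α] [DecidableEq α] {M W : Finset α}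
    (hMW : M ∪ W = Finset.univ) (hdisj : Disjoint M W) (i : α) :
    i ∈ W ↔ i ∉ M := by
  constructor
  · intro h hM2; exact (Finset.disjoint_left.mp hdisj hM2) h
  · intro h
    have : i ∈ M ∪ W := hMW ▸ Finset.mem_univ i
    rcases Finset.mem_union.mp this with h' | h'
    · exact absurd h' h
    · exact h'

lemma flip_card {α} [Fintype α] [DecidableEq α] (M W M' W' : Finset α)
    (hMW : M ∪ W = Finset.univ) (hdisj : Disjoint M W)
    (hMW' : M' ∪ W' = Finset.univ) (hdisj' : Disjoint M' W')
    (hcard : M.card = M'.card) :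
    (Finset.univ.filter (fun i => ¬(i ∈ M ↔ i ∈ M'))).card = 2 * (M ∩ W').card := by
  have hW := compl_char hMW hdisj
  have hW' := compl_char hMW' hdisj'
  have hset : (Finset.univ.filter (fun i => ¬(i ∈ M ↔ i ∈ M'))) = (M ∩ W') ∪ (W ∩ M') := by
    ext i
    simp only [Finset.mem_filter, Finset.mem_union, Finset.mem_inter, Finset.mem_univ, true_and]
    have := hW i; have := hW' i
    tauto
  have hd : Disjoint (M ∩ W') (W ∩ M') :=
    Disjoint.mono Finset.inter_subset_left Finset.inter_subset_left hdisj
  have e1 : (M ∩ M').card + (M ∩ W').card = M.card := by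
    rw [← Finset.card_union_of_disjoint
      (Disjoint.mono Finset.inter_subset_right Finset.inter_subset_right hdisj')]
    congr 1
    ext i
    simp only [Finset.mem_union, Finset.mem_inter]
    have := hW' i; tauto
  have e2 : (M ∩ M').card + (W ∩ M').card = M'.card := by
    rw [← Finset.card_union_of_disjoint
      (Disjoint.mono Finset.inter_subset_left Finset.inter_subset_left hdisj)]
    congr 1
    ext i
    simp only [Finset.mem_union, Finset.mem_inter]
    have := hW i; tauto
  rw [hset, Finset.card_union_of_disjoint hd]
  omega

/-- For nominal rating matrices `B, B'` defined by two pairs of partitions, the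
number of entries where `B` and `B'` differ is `2 m k₁ + 2 n k₂ - 8 k₁ k₂`,
where `k₁ = |M ∩ W'|` and `k₂ = |A ∩ R'|`. -/
theorem rating_matrix_disagreement_count (n m : ℕ) (hn : Even n) (hm : Even m)
    (M W M' W' : Finset (Fin n)) (A R A' R' : Finset (Fin m))
    (hMW : M ∪ W = Finset.univ) (hdisjMW : Disjoint M W)
    (hMW' : M' ∪ W' = Finset.univ) (hdisjMW' : Disjoint M' W')
    (hAR : A ∪ R = Finset.univ) (hdisjAR : Disjoint A R)
    (hAR' : A' ∪ R' = Finset.univ) (hdisjAR' : Disjoint A' R')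
    (hM : M.card = n / 2) (hW : W.card = n / 2)
    (hM' : M'.card = n / 2) (hW' : W'.card = n / 2)
    (hA : A.card = m / 2) (hR : R.card = m / 2)
    (hA' : A'.card = m / 2) (hR' : R'.card = m / 2)
    (k₁ k₂ : ℕ) (hk₁ : k₁ = (M ∩ W').card) (hk₂ : k₂ = (A ∩ R').card) :
    (Finset.univ.filter fun p : Fin n × Fin m =>
        (decide ((p.1 ∈ M ∧ p.2 ∈ A) ∨ (p.1 ∈ W ∧ p.2 ∈ R)) ≠
          decide ((p.1 ∈ M' ∧ p.2 ∈ A') ∨ (p.1 ∈ W' ∧ p.2 ∈ R')))).card =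
      2 * m * k₁ + 2 * n * k₂ - 8 * (k₁ * k₂) := by
  classical
  let S₁ : Finset (Fin n) := Finset.univ.filter (fun i => ¬(i ∈ M ↔ i ∈ M'))
  let S₂ : Finset (Fin m) := Finset.univ.filter (fun j => ¬(j ∈ A ↔ j ∈ A'))
  have hc₁ : S₁.card = 2 * k₁ := by
    rw [hk₁]; exact flip_card M W M' W' hMW hdisjMW hMW' hdisjMW' (by omega)
  have hc₂ : S₂.card = 2 * k₂ := by
    rw [hk₂]; exact flip_card A R A' R' hAR hdisjAR hAR' hdisjAR' (by omega)
  have hb₁ : S₁.card ≤ n := by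
    simpa using Finset.card_le_card (Finset.subset_univ S₁)
  have hb₂ : S₂.card ≤ m := by
    simpa using Finset.card_le_card (Finset.subset_univ S₂)
  have hWc := compl_char hMW hdisjMW
  have hWc' := compl_char hMW' hdisjMW'
  have hRc := compl_char hAR hdisjAR
  have hRc' := compl_char hAR' hdisjAR'
  have hset : (Finset.univ.filter fun p : Fin n × Fin m =>
        (decide ((p.1 ∈ M ∧ p.2 ∈ A) ∨ (p.1 ∈ W ∧ p.2 ∈ R)) ≠
          decide ((p.1 ∈ M' ∧ p.2 ∈ A') ∨ (p.1 ∈ W' ∧ p.2 ∈ R')))) =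
      (S₁ ×ˢ S₂ᶜ) ∪ (S₁ᶜ ×ˢ S₂) := by
    ext p
    simp only [Finset.mem_filter, Finset.mem_union, Finset.mem_product, Finset.mem_compl,
      Finset.mem_univ, true_and, S₁, S₂, ne_eq, decide_eq_decide, not_not]
    rw [hWc p.1, hWc' p.1, hRc p.2, hRc' p.2]
    by_cases h1 : p.1 ∈ M <;> by_cases h2 : p.1 ∈ M' <;>
      by_cases h3 : p.2 ∈ A <;> by_cases h4 : p.2 ∈ A' <;>
      simp [h1, h2, h3, h4]
  have hdisjP : Disjoint (S₁ ×ˢ S₂ᶜ) (S₁ᶜ ×ˢ S₂) := by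
    rw [Finset.disjoint_left]
    rintro p hp hq
    rw [Finset.mem_product] at hp hq
    exact (Finset.mem_compl.mp hq.1) hp.1
  rw [hset, Finset.card_union_of_disjoint hdisjP, Finset.card_product, Finset.card_product,
    Finset.card_compl, Finset.card_compl, Fintype.card_fin, Fintype.card_fin, hc₁, hc₂]
  have h1 : 2 * k₁ * (m - 2 * k₂) = 2 * k₁ * m - 2 * k₁ * (2 * k₂) := Nat.mul_sub _ _ _
  have h2 : (n - 2 * k₁) * (2 * k₂) = n * (2 * k₂) - 2 * k₁ * (2 * k₂) := Nat.sub_mul _ _ _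
  have h3 : 2 * k₁ * (2 * k₂) ≤ 2 * k₁ * m := Nat.mul_le_mul_left _ (by omega)
  have h4 : 2 * k₁ * (2 * k₂) ≤ n * (2 * k₂) := Nat.mul_le_mul_right _ (by omega)
  have h5 : 2 * k₁ * m = 2 * m * k₁ := by ring
  have h6 : n * (2 * k₂) = 2 * n * k₂ := by ring
  have h7 : 2 * k₁ * (2 * k₂) * 2 = 8 * (k₁ * k₂) := by ring
  omega
end

section
/- For α, β ∈ (0,1), the quantity (√(αβ) + √((1−α)(1−β)))² is at most exp(−(√α − √β)²). -/
/-- For `α, β ∈ (0,1)`, `(√(αβ) + √((1-α)(1-β)))² ≤ exp(-(√α - √β)²)`. -/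
theorem bhattacharyya_bound (α β : ℝ) (hα : α ∈ Set.Ioo (0 : ℝ) 1)
    (hβ : β ∈ Set.Ioo (0 : ℝ) 1) :
    (Real.sqrt (α * β) + Real.sqrt ((1 - α) * (1 - β))) ^ 2 ≤
      Real.exp (-(Real.sqrt α - Real.sqrt β) ^ 2) := by
  obtain ⟨hα0, hα1⟩ := hα
  obtain ⟨hβ0, hβ1⟩ := hβ
  have h1a : (0:ℝ) ≤ 1 - α := by linarith
  have h1b : (0:ℝ) ≤ 1 - β := by linarith
  have ha := Real.sq_sqrt hα0.le
  have hb := Real.sq_sqrt hβ0.le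
  have hca := Real.sq_sqrt h1a
  have hcb := Real.sq_sqrt h1b
  set a := Real.sqrt α with haa
  set b := Real.sqrt β with hbb
  have key : Real.sqrt (α * β) + Real.sqrt ((1 - α) * (1 - β)) ≤
      Real.exp (-((a - b) ^ 2 / 2)) := by
    have hexp : 1 - (a - b) ^ 2 / 2 ≤ Real.exp (-((a - b) ^ 2 / 2)) := by
      have := Real.add_one_le_exp (-((a - b) ^ 2 / 2)); linarith
    have hle : Real.sqrt (α * β) + Real.sqrt ((1 - α) * (1 - β)) ≤
        1 - (a - b) ^ 2 / 2 := by
      rw [Real.sqrt_mul hα0.le, Real.sqrt_mul h1a]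
      nlinarith [sq_nonneg (Real.sqrt (1 - α) - Real.sqrt (1 - β)),
        Real.sqrt_nonneg (1 - α), Real.sqrt_nonneg (1 - β)]
    linarith
  have hnn : 0 ≤ Real.sqrt (α * β) + Real.sqrt ((1 - α) * (1 - β)) := by positivity
  calc (Real.sqrt (α * β) + Real.sqrt ((1 - α) * (1 - β))) ^ 2
      ≤ (Real.exp (-((a - b) ^ 2 / 2))) ^ 2 := by
        exact pow_le_pow_left₀ hnn key 2
    _ = Real.exp (-(a - b) ^ 2) := by
        rw [sq, ← Real.exp_add]; ring_nf
end
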